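/- arXiv:1708.03992 — 3 statements merged into one kernel-verified Lean document; each statement's English description precedes it below -/
import Mathlib

section
/- Let L be a positive even integer and let H_L(λ) = 2 sin^L(λ/2) · Σ_{p=0}^{L/2-1} C(L/2-1+p, p) cos^{2p}(λ/2). Then H_L(λ) + H_L(λ - π) = 2 for all real λ. -/
open Finset

lemma sumrec (M : ℕ) (y : ℝ) :
    (1 - y) * ∑ p ∈ Finset.range (M + 2), ((M + 1 + p).choose p : ℝ) * y ^ p
      = (∑ p ∈ Finset.range (M + 1), ((M + p).choose p : ℝ) * y ^ p)
        + ((2 * M + 1).choose (M + 1) : ℝ) * y ^ (M + 1) * (1 - 2 * y) := by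
  set A := ∑ p ∈ Finset.range (M + 2), ((M + 1 + p).choose p : ℝ) * y ^ p with hA
  set T := ∑ p ∈ Finset.range (M + 1), ((M + p).choose p : ℝ) * y ^ p with hT
  have hsym : ((2 * M + 1).choose M : ℝ) = ((2 * M + 1).choose (M + 1) : ℝ) := by
    have := Nat.choose_symm (n := 2 * M + 1) (k := M + 1) (by omega)
    have h2 : 2 * M + 1 - (M + 1) = M := by omega
    rw [h2] at this
    exact_mod_cast this
  have hdouble : ((2 * M + 2).choose (M + 1) : ℝ) = 2 * ((2 * M + 1).choose (M + 1) : ℝ) := by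
    have : (2 * M + 2).choose (M + 1) = (2 * M + 1).choose M + (2 * M + 1).choose (M + 1) :=
      Nat.choose_succ_succ' (2 * M + 1) M ▸ rfl
    push_cast [this]
    rw [hsym]; ring
  -- peel first term of A
  have h1 : A = (∑ p ∈ Finset.range (M + 1), ((M + 1 + (p + 1)).choose (p + 1) : ℝ) * y ^ (p + 1)) + 1 := by
    rw [hA, Finset.sum_range_succ']
    simp
  have hpascal : ∀ p, ((M + 1 + (p + 1)).choose (p + 1) : ℝ)
      = ((M + p + 1).choose p : ℝ) + ((M + p + 1).choose (p + 1) : ℝ) := by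
    intro p
    have : (M + 1 + (p + 1)) = (M + p + 1) + 1 := by omega
    rw [this, Nat.choose_succ_succ']
    push_cast; ring
  have h2 : A = (∑ p ∈ Finset.range (M + 1), ((M + p + 1).choose p : ℝ) * y ^ (p + 1))
      + (∑ p ∈ Finset.range (M + 1), ((M + p + 1).choose (p + 1) : ℝ) * y ^ (p + 1)) + 1 := by
    rw [h1, ← Finset.sum_add_distrib]
    congr 1
    apply Finset.sum_congr rfl
    intro p _
    rw [hpascal p]; ring
  -- first sum: these are A-coefficients
  have hAsplit : ∑ p ∈ Finset.range (M + 1), ((M + 1 + p).choose p : ℝ) * y ^ p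
      = A - ((2 * M + 2).choose (M + 1) : ℝ) * y ^ (M + 1) := by
    have hs := Finset.sum_range_succ (fun p => ((M + 1 + p).choose p : ℝ) * y ^ p) (M + 1)
    have hidx : M + 1 + (M + 1) = 2 * M + 2 := by omega
    simp only [hidx] at hs
    rw [hA, hs]; ring
  have hfirst : (∑ p ∈ Finset.range (M + 1), ((M + p + 1).choose p : ℝ) * y ^ (p + 1))
      = y * (A - ((2 * M + 2).choose (M + 1) : ℝ) * y ^ (M + 1)) := by
    rw [← hAsplit, Finset.mul_sum]
    apply Finset.sum_congr rfl
    intro p _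
    have : M + p + 1 = M + 1 + p := by omega
    rw [this]; ring
  -- second sum via B
  have hB : (∑ p ∈ Finset.range (M + 2), ((M + p).choose p : ℝ) * y ^ p)
      = (∑ p ∈ Finset.range (M + 1), ((M + (p + 1)).choose (p + 1) : ℝ) * y ^ (p + 1)) + 1 := by
    rw [Finset.sum_range_succ']
    simp
  have hB2 : (∑ p ∈ Finset.range (M + 2), ((M + p).choose p : ℝ) * y ^ p)
      = T + ((2 * M + 1).choose (M + 1) : ℝ) * y ^ (M + 1) := by
    have hs := Finset.sum_range_succ (fun p => ((M + p).choose p : ℝ) * y ^ p) (M + 1)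
    have hidx : M + (M + 1) = 2 * M + 1 := by omega
    simp only [hidx] at hs
    rw [hs, hT]
  have hsecond : (∑ p ∈ Finset.range (M + 1), ((M + p + 1).choose (p + 1) : ℝ) * y ^ (p + 1))
      = T + ((2 * M + 1).choose (M + 1) : ℝ) * y ^ (M + 1) - 1 := by
    have e : (∑ p ∈ Finset.range (M + 1), ((M + p + 1).choose (p + 1) : ℝ) * y ^ (p + 1))
        = (∑ p ∈ Finset.range (M + 1), ((M + (p + 1)).choose (p + 1) : ℝ) * y ^ (p + 1)) := by
      apply Finset.sum_congr rfl
      intro p _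
      have h : M + p + 1 = M + (p + 1) := by omega
      rw [h]
    rw [e]
    have := hB.symm.trans hB2
    linarith [this]
  rw [hfirst, hsecond] at h2
  rw [hdouble] at h2
  nlinarith [h2]

lemma key (M : ℕ) (x y : ℝ) (hxy : x + y = 1) :
    x ^ (M + 1) * (∑ p ∈ Finset.range (M + 1), ((M + p).choose p : ℝ) * y ^ p)
      + y ^ (M + 1) * (∑ p ∈ Finset.range (M + 1), ((M + p).choose p : ℝ) * x ^ p) = 1 := by
  induction M with
  | zero => simp; linarith
  | succ M ih =>
    have hx : (1 : ℝ) - y = x := by linarith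
    have hy : (1 : ℝ) - x = y := by linarith
    have r1 := sumrec M y
    have r2 := sumrec M x
    rw [hx] at r1
    rw [hy] at r2
    have e1 : x ^ (M + 2) * (∑ p ∈ Finset.range (M + 2), ((M + 1 + p).choose p : ℝ) * y ^ p)
        = x ^ (M + 1) * ((1 - y) * ∑ p ∈ Finset.range (M + 2), ((M + 1 + p).choose p : ℝ) * y ^ p) := by
      rw [hx]; ring
    have e2 : y ^ (M + 2) * (∑ p ∈ Finset.range (M + 2), ((M + 1 + p).choose p : ℝ) * x ^ p)
        = y ^ (M + 1) * ((1 - x) * ∑ p ∈ Finset.range (M + 2), ((M + 1 + p).choose p : ℝ) * x ^ p) := by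
      rw [hy]; ring
    have h12 : (1 - 2 * y) + (1 - 2 * x) = 0 := by linarith
    rw [show M + 1 + 1 = M + 2 from rfl, e1, e2, hx, hy, r1, r2]
    linear_combination ih + ((2 * M + 1).choose (M + 1) : ℝ) * x ^ (M + 1) * y ^ (M + 1) * h12

/-- Halfband (quadrature mirror) property of the Daubechies power transfer
function: `H_L(λ) + H_L(λ - π) = 2` for `L` a positive even integer, where
`H_L(λ) = 2 sin^L(λ/2) Σ_{p=0}^{L/2-1} C(L/2-1+p, p) cos^{2p}(λ/2)`. -/
theorem daubechies_halfband (L : ℕ) (hL : 0 < L) (hLeven : Even L)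
    (H : ℝ → ℝ)
    (hH : ∀ lam : ℝ, H lam =
      2 * Real.sin (lam / 2) ^ L *
        ∑ p ∈ Finset.range (L / 2),
          ((L / 2 - 1 + p).choose p : ℝ) * Real.cos (lam / 2) ^ (2 * p)) :
    ∀ lam : ℝ, H lam + H (lam - Real.pi) = 2 := by
  obtain ⟨N, hN⟩ := hLeven
  have hN1 : 1 ≤ N := by omega
  obtain ⟨M, rfl⟩ : ∃ M, N = M + 1 := ⟨N - 1, by omega⟩
  have hL2 : L = 2 * (M + 1) := by omega
  have hhalf : L / 2 = M + 1 := by omega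
  intro lam
  rw [hH lam, hH (lam - Real.pi)]
  have hshift : (lam - Real.pi) / 2 = lam / 2 - Real.pi / 2 := by ring
  have hsin : Real.sin ((lam - Real.pi) / 2) = -Real.cos (lam / 2) := by
    rw [hshift, Real.sin_sub_pi_div_two]
  have hcos : Real.cos ((lam - Real.pi) / 2) = Real.sin (lam / 2) := by
    rw [hshift, Real.cos_sub_pi_div_two]
  set s := Real.sin (lam / 2)
  set c := Real.cos (lam / 2)
  have hsc : s ^ 2 + c ^ 2 = 1 := Real.sin_sq_add_cos_sq _
  rw [hsin, hcos, hhalf, hL2]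
  have hsL : s ^ (2 * (M + 1)) = (s ^ 2) ^ (M + 1) := by rw [← pow_mul]
  have hcL : (-c) ^ (2 * (M + 1)) = (c ^ 2) ^ (M + 1) := by
    rw [pow_mul, neg_sq]
  have hcp : ∀ p : ℕ, c ^ (2 * p) = (c ^ 2) ^ p := fun p => by rw [← pow_mul]
  have hsp : ∀ p : ℕ, (-c) ^ (2 * p)  = (c ^ 2) ^ p := fun p => by rw [pow_mul, neg_sq]
  have hsp2 : ∀ p : ℕ, s ^ (2 * p) = (s ^ 2) ^ p := fun p => by rw [← pow_mul]
  have hidx : ∀ p : ℕ, M + 1 - 1 + p = M + p := fun p => by omega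
  have hk := key M (s ^ 2) (c ^ 2) hsc
  simp only [hsL, hcL, hcp, hsp2, hidx]
  nlinarith [hk]
end

section
/- Let Π¹ and Π² be two finite partitions of an interval [0,T] into consecutive half-open intervals, and let θ ∈ ℝ. Then there exist refinement-coarsening modifications Π̃¹ of Π¹ and Π̃² of Π² (obtained by merging all intervals of Π¹ contained in a single interval J_{-θ} with J ∈ Π², and symmetrically for Π²) such that: (i) Σ_{I∈Π̃¹} x_I y_I-type bilinear sums Σ_{I,J} X¹(I)X²(J) 1_{I ∩ J_{-θ} ≠ ∅} are unchanged for any additive interval functions X¹, X²; and (ii) max_{J∈Π̃²} Σ_{I∈Π̃¹} 1_{I ∩ J_{-θ} ≠ ∅} ≤ 3 and max_{I∈Π̃¹} Σ_{J∈Π̃²} 1_{I ∩ J_{-θ} ≠ ∅} ≤ 3. -/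
open Finset

lemma hy_ioc_disj {a b c d : ℝ} (h : b ≤ c) : Set.Ioc a b ∩ Set.Ioc c d = ∅ := by
  ext x; simp only [Set.mem_inter_iff, Set.mem_Ioc, Set.mem_empty_iff_false, iff_false]
  rintro ⟨⟨_, h2⟩, ⟨h3, _⟩⟩; linarith

open scoped Classical in
lemma hy_exists_enum (n : ℕ) (hn : 0 < n) (R : ℕ → Prop) :
    ∃ m e, 0 < m ∧ StrictMonoOn e (Set.Iic m) ∧ e 0 = 0 ∧ e m = n ∧
      (∀ i ≤ m, e i ≤ n) ∧
      (∀ i ≤ m, e i = 0 ∨ e i = n ∨ ¬ R (e i)) ∧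
      (∀ i < m, ∀ l, e i < l → l < e (i + 1) → R l) := by
  classical
  set K : Finset ℕ := (range (n+1)).filter (fun k => k = 0 ∨ k = n ∨ ¬ R k) with hK
  have h0K : 0 ∈ K := by simp [hK, Nat.succ_pos]
  have hnK : n ∈ K := by simp [hK]
  have hKle : ∀ k ∈ K, k ≤ n := by
    intro k hk; simp only [hK, mem_filter, mem_range] at hk; omega
  have hcard : 0 < K.card - 1 := by
    have : ({0, n} : Finset ℕ) ⊆ K := by
      intro x hx; simp only [mem_insert, mem_singleton] at hx; rcases hx with rfl | rfl <;> assumption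
    have h2 : ({0, n} : Finset ℕ).card = 2 := by rw [card_insert_of_notMem (by simp; omega)]; simp
    have := card_le_card this; omega
  set m := K.card - 1 with hm
  have hmc : m + 1 = K.card := by omega
  set f := K.orderEmbOfFin (rfl : K.card = K.card) with hf
  set e : ℕ → ℕ := fun i => if h : i < K.card then f ⟨i, h⟩ else n + 1 + i with he
  have heval : ∀ i (h : i < K.card), e i = f ⟨i, h⟩ := by intro i h; simp [he, h]
  have hemem : ∀ i ≤ m, e i ∈ K := by
    intro i hi
    rw [heval i (by omega)]; exact Finset.orderEmbOfFin_mem _ _ _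
  have hmono : StrictMonoOn e (Set.Iic m) := by
    intro i hi j hj hij
    simp only [Set.mem_Iic] at hi hj
    rw [heval i (by omega), heval j (by omega)]
    exact f.strictMono (by exact hij)
  have he0 : e 0 = 0 := by
    have h1 : e 0 ∈ K := hemem 0 (by omega)
    have h2 : e 0 ≤ 0 := by
      rw [heval 0 (by omega)]
      have := Finset.orderEmbOfFin_zero (rfl : K.card = K.card) (by omega)
      calc f ⟨0, by omega⟩ = K.min' _ := this
        _ ≤ 0 := Finset.min'_le _ _ h0K
    omega
  have hem : e m = n := by
    have h1 : e m ≤ n := hKle _ (hemem m le_rfl)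
    have h2 : n ≤ e m := by
      rw [heval m (by omega)]
      have := Finset.orderEmbOfFin_last (rfl : K.card = K.card) (by omega)
      have hmm : (⟨K.card - 1, Nat.sub_lt (by omega) (by omega)⟩ : Fin K.card) = ⟨m, by omega⟩ := rfl
      rw [hmm] at this
      calc n ≤ K.max' ⟨0, h0K⟩ := Finset.le_max' _ _ hnK
        _ = f ⟨m, by omega⟩ := this.symm
    omega
  refine ⟨m, e, hcard, hmono, he0, hem, fun i hi => hKle _ (hemem i hi), ?_, ?_⟩
  · intro i hi
    have := hemem i hi
    simp only [hK, mem_filter] at this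
    tauto
  · intro i hi l h1 h2
    by_contra hR
    have hlK : l ∈ K := by
      simp only [hK, mem_filter, mem_range]
      have : e (i+1) ≤ n := hKle _ (hemem (i+1) (by omega))
      refine ⟨by omega, Or.inr (Or.inr hR)⟩
    -- l = f x for some x
    have : l ∈ Set.range f := by rw [Finset.range_orderEmbOfFin]; exact hlK
    obtain ⟨x, hx⟩ := this
    rw [heval i (by omega)] at h1
    rw [heval (i+1) (by omega)] at h2
    rw [← hx] at h1 h2
    have hxi : (⟨i, by omega⟩ : Fin K.card) < x := f.strictMono.lt_iff_lt.mp h1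
    have hxi2 : x < (⟨i+1, by omega⟩ : Fin K.card) := f.strictMono.lt_iff_lt.mp h2
    have : i < (x : ℕ) := hxi
    have : (x : ℕ) < i + 1 := hxi2
    omega

lemma hy_sum_blocks (m : ℕ) (e : ℕ → ℕ) (hmono : ∀ i < m, e i ≤ e (i+1)) (g : ℕ → ℝ) :
    ∑ i ∈ range m, ∑ l ∈ Finset.Ico (e i) (e (i+1)), g l = ∑ l ∈ Finset.Ico (e 0) (e m), g l := by
  induction m with
  | zero => simp
  | succ m ih =>
    have h0m : e 0 ≤ e m := by
      clear ih
      induction m with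
      | zero => exact le_rfl
      | succ k ihk => exact le_trans (ihk (fun i hi => hmono i (by omega))) (hmono k (by omega))
    rw [Finset.sum_range_succ, ih (fun i hi => hmono i (by omega))]
    exact Finset.sum_Ico_consecutive _ h0m (hmono m (by omega))

lemma hy_telescope (F : ℕ → ℝ) {a b : ℕ} (h : a ≤ b) :
    ∑ l ∈ Finset.Ico a b, (F (l+1) - F l) = F b - F a := by
  rw [Finset.sum_Ico_eq_sub _ h, Finset.sum_range_sub, Finset.sum_range_sub]
  ring

lemma hy_merged_subset (n N : ℕ) (t : ℕ → ℝ) (ht : StrictMonoOn t (Set.Iic n))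
    (A : ℕ → Set ℝ) (hA : ∀ j < N, ∀ j' < N, j ≠ j' → A j ∩ A j' = ∅)
    {p q : ℕ} (hpq : p + 1 < q) (hq : q ≤ n)
    (hgap : ∀ l, p < l → l < q → ∃ j < N, Set.Ioc (t (l - 1)) (t (l + 1)) ⊆ A j) :
    ∃ j < N, Set.Ioc (t p) (t q) ⊆ A j := by
  have tmono : ∀ a b : ℕ, a ≤ b → b ≤ n → t a ≤ t b := by
    intro a b hab hb
    exact ht.monotoneOn (Set.mem_Iic.mpr (hab.trans hb)) (Set.mem_Iic.mpr hb) hab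
  have tlt : ∀ a b : ℕ, a < b → b ≤ n → t a < t b := by
    intro a b hab hb
    exact ht (Set.mem_Iic.mpr (hab.le.trans hb)) (Set.mem_Iic.mpr hb) hab
  have hpq2 : p + 2 ≤ q := hpq
  clear hpq
  induction q, hpq2 using Nat.le_induction with
  | base =>
    obtain ⟨j, hj, hsub⟩ := hgap (p+1) (by omega) (by omega)
    refine ⟨j, hj, ?_⟩
    have h1 : p + 1 - 1 = p := by omega
    rwa [h1] at hsub
  | succ q hq2 ih =>
    rcases Nat.lt_or_ge (p+1) q with hlt | hge
    · obtain ⟨j, hjN, hsubj⟩ := ih (by omega) (fun l h1 h2 => hgap l h1 (by omega))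
      obtain ⟨j', hj'N, hsubj'⟩ := hgap q (by omega) (by omega)
      have hjj : j = j' := by
        by_contra hne
        have hmem : t q ∈ A j ∩ A j' := by
          constructor
          · exact hsubj ⟨tlt p q (by omega) (by omega), le_rfl⟩
          · exact hsubj' ⟨tlt (q-1) q (by omega) (by omega), tmono q (q+1) (by omega) hq⟩
        rw [hA j hjN j' hj'N hne] at hmem
        exact hmem
      refine ⟨j, hjN, ?_⟩
      intro x hx
      rcases le_or_gt x (t q) with hle | hgt
      · exact hsubj ⟨hx.1, hle⟩
      · rw [hjj]
        exact hsubj' ⟨lt_of_le_of_lt (tmono (q-1) q (by omega) (by omega)) hgt, hx.2⟩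
    · have hqe : q = p + 1 := by omega
      obtain ⟨j, hj, hsub⟩ := hgap (p+1) (by omega) (by omega)
      refine ⟨j, hj, ?_⟩
      have h1 : p + 1 - 1 = p := by omega
      rw [h1] at hsub
      rw [hqe]
      exact hsub

open scoped Classical in
lemma hy_sum_invariance (n N : ℕ) (t : ℕ → ℝ) (ht : StrictMonoOn t (Set.Iic n))
    (A : ℕ → Set ℝ) (hA : ∀ j < N, ∀ j' < N, j ≠ j' → A j ∩ A j' = ∅)
    (m : ℕ) (e : ℕ → ℕ) (he : StrictMonoOn e (Set.Iic m))
    (he0 : e 0 = 0) (hem : e m = n) (hele : ∀ i ≤ m, e i ≤ n)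
    (hgap : ∀ i < m, ∀ l, e i < l → l < e (i + 1) →
       ∃ j < N, Set.Ioc (t (l - 1)) (t (l + 1)) ⊆ A j)
    (F c : ℕ → ℝ) :
    ∑ i ∈ range m, ∑ j ∈ range N,
      (if (Set.Ioc (t (e i)) (t (e (i+1))) ∩ A j).Nonempty then (F (e (i+1)) - F (e i)) * c j else 0)
    = ∑ l ∈ range n, ∑ j ∈ range N,
      (if (Set.Ioc (t l) (t (l+1)) ∩ A j).Nonempty then (F (l+1) - F l) * c j else 0) := by
  have tmono : ∀ a b : ℕ, a ≤ b → b ≤ n → t a ≤ t b := fun a b hab hb =>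
    ht.monotoneOn (Set.mem_Iic.mpr (hab.trans hb)) (Set.mem_Iic.mpr hb) hab
  have tlt : ∀ a b : ℕ, a < b → b ≤ n → t a < t b := fun a b hab hb =>
    ht (Set.mem_Iic.mpr (hab.le.trans hb)) (Set.mem_Iic.mpr hb) hab
  have key : ∀ i < m,
      ∑ j ∈ range N, (if (Set.Ioc (t (e i)) (t (e (i+1))) ∩ A j).Nonempty then
          (F (e (i+1)) - F (e i)) * c j else 0)
      = ∑ l ∈ Finset.Ico (e i) (e (i+1)), ∑ j ∈ range N,
          (if (Set.Ioc (t l) (t (l+1)) ∩ A j).Nonempty then (F (l+1) - F l) * c j else 0) := by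
    intro i hi
    have hii : e i < e (i+1) :=
      he (Set.mem_Iic.mpr (by omega)) (Set.mem_Iic.mpr (by omega)) (by omega)
    have hein : e (i+1) ≤ n := hele (i+1) (by omega)
    rcases eq_or_lt_of_le (Nat.succ_le_of_lt hii) with heq | hlt
    · rw [← heq, Nat.Ico_succ_singleton, Finset.sum_singleton]
    · obtain ⟨js, hjs, hsub⟩ := hy_merged_subset n N t ht A hA hlt hein (hgap i hi)
      have hne : (Set.Ioc (t (e i)) (t (e (i+1)))).Nonempty :=
        ⟨t (e (i+1)), ⟨tlt _ _ hii hein, le_rfl⟩⟩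
      have hcond : ∀ j < N, (Set.Ioc (t (e i)) (t (e (i+1))) ∩ A j).Nonempty ↔ j = js := by
        intro j hj
        constructor
        · intro ⟨x, hx1, hx2⟩
          by_contra hne2
          have : x ∈ A j ∩ A js := ⟨hx2, hsub hx1⟩
          rw [hA j hj js hjs hne2] at this; exact this
        · rintro rfl
          exact ⟨t (e (i+1)), ⟨tlt _ _ hii hein, le_rfl⟩, hsub ⟨tlt _ _ hii hein, le_rfl⟩⟩
      have lhs_eq : ∑ j ∈ range N, (if (Set.Ioc (t (e i)) (t (e (i+1))) ∩ A j).Nonempty then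
          (F (e (i+1)) - F (e i)) * c j else 0) = (F (e (i+1)) - F (e i)) * c js := by
        rw [Finset.sum_eq_single js]
        · rw [if_pos ((hcond js hjs).mpr rfl)]
        · intro j hj hne2
          rw [if_neg]
          intro hcon
          exact hne2 ((hcond j (mem_range.mp hj)).mp hcon)
        · intro h; exact absurd (mem_range.mpr hjs) h
      rw [lhs_eq]
      have rhs_eq : ∀ l ∈ Finset.Ico (e i) (e (i+1)),
          ∑ j ∈ range N, (if (Set.Ioc (t l) (t (l+1)) ∩ A j).Nonempty then (F (l+1) - F l) * c j else 0)
          = (F (l+1) - F l) * c js := by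
        intro l hl
        rw [Finset.mem_Ico] at hl
        have hsubl : Set.Ioc (t l) (t (l+1)) ⊆ Set.Ioc (t (e i)) (t (e (i+1))) :=
          Set.Ioc_subset_Ioc (tmono _ _ hl.1 (by omega)) (tmono _ _ (by omega) hein)
        have hnel : (Set.Ioc (t l) (t (l+1))).Nonempty := ⟨t (l+1), tlt l (l+1) (by omega) (by omega), le_rfl⟩
        have hcondl : ∀ j < N, (Set.Ioc (t l) (t (l+1)) ∩ A j).Nonempty ↔ j = js := by
          intro j hj
          constructor
          · intro ⟨x, hx1, hx2⟩
            by_contra hne2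
            have : x ∈ A j ∩ A js := ⟨hx2, hsub (hsubl hx1)⟩
            rw [hA j hj js hjs hne2] at this; exact this
          · rintro rfl
            exact ⟨t (l+1), ⟨tlt l (l+1) (by omega) (by omega), le_rfl⟩,
              hsub (hsubl ⟨tlt l (l+1) (by omega) (by omega), le_rfl⟩)⟩
        rw [Finset.sum_eq_single js]
        · rw [if_pos ((hcondl js hjs).mpr rfl)]
        · intro j hj hne2
          rw [if_neg]
          intro hcon
          exact hne2 ((hcondl j (mem_range.mp hj)).mp hcon)
        · intro h; exact absurd (mem_range.mpr hjs) h
      rw [Finset.sum_congr rfl rhs_eq, ← Finset.sum_mul, hy_telescope F hii.le]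
  calc ∑ i ∈ range m, ∑ j ∈ range N,
        (if (Set.Ioc (t (e i)) (t (e (i+1))) ∩ A j).Nonempty then (F (e (i+1)) - F (e i)) * c j else 0)
      = ∑ i ∈ range m, ∑ l ∈ Finset.Ico (e i) (e (i+1)), ∑ j ∈ range N,
          (if (Set.Ioc (t l) (t (l+1)) ∩ A j).Nonempty then (F (l+1) - F l) * c j else 0) :=
        Finset.sum_congr rfl (fun i hi => key i (mem_range.mp hi))
    _ = ∑ l ∈ Finset.Ico (e 0) (e m), ∑ j ∈ range N,
          (if (Set.Ioc (t l) (t (l+1)) ∩ A j).Nonempty then (F (l+1) - F l) * c j else 0) :=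
        hy_sum_blocks m e (fun i hi =>
          (he (Set.mem_Iic.mpr (by omega)) (Set.mem_Iic.mpr (by omega)) (by omega)).le) _
    _ = ∑ l ∈ range n, ∑ j ∈ range N,
          (if (Set.Ioc (t l) (t (l+1)) ∩ A j).Nonempty then (F (l+1) - F l) * c j else 0) := by
        simp only [he0, hem, Finset.range_eq_Ico]

open scoped Classical in
lemma hy_bound_three (m : ℕ) (s : ℕ → ℝ) (a b : ℝ)
    (hs : ∀ i j : ℕ, i ≤ j → j ≤ m → s i ≤ s j)
    (hnc : ∀ i, i + 2 ≤ m → ¬(Set.Ioc (s i) (s (i+1)) ⊆ Set.Ioc a b ∧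
        Set.Ioc (s (i+1)) (s (i+2)) ⊆ Set.Ioc a b)) :
    ((range m).filter fun i => (Set.Ioc (s i) (s (i+1)) ∩ Set.Ioc a b).Nonempty).card ≤ 3 := by
  set Fs := (range m).filter fun i => (Set.Ioc (s i) (s (i+1)) ∩ Set.Ioc a b).Nonempty with hFs
  rcases Fs.eq_empty_or_nonempty with hE | hNE
  · rw [hE]; simp
  set p := Fs.min' hNE with hp
  have hpm : p ∈ Fs := Fs.min'_mem hNE
  have hfacts : ∀ i ∈ Fs, i < m ∧ s i < b ∧ a < s (i+1) := by
    intro i hi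
    rw [hFs, mem_filter, mem_range] at hi
    obtain ⟨him, x, ⟨hx1, hx2⟩, ⟨hx3, hx4⟩⟩ := hi
    exact ⟨him, lt_of_lt_of_le hx1 hx4, lt_of_lt_of_le hx3 hx2⟩
  obtain ⟨hpm', hpb, hpa⟩ := hfacts p hpm
  have hsub : Fs ⊆ Finset.Icc p (p+2) := by
    intro i hi
    obtain ⟨him, hib, hia⟩ := hfacts i hi
    rw [Finset.mem_Icc]
    refine ⟨Fs.min'_le i hi, ?_⟩
    by_contra hcon
    have h3 : p + 3 ≤ i := by omega
    apply hnc (p+1) (by omega)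
    constructor
    · intro x ⟨hx1, hx2⟩
      exact ⟨lt_of_lt_of_le hpa hx1.le, le_trans hx2 (le_trans (hs (p+2) i (by omega) (by omega)) hib.le)⟩
    · intro x ⟨hx1, hx2⟩
      refine ⟨lt_of_lt_of_le hpa (le_trans (hs (p+1) (p+2) (by omega) (by omega)) hx1.le), ?_⟩
      exact le_trans hx2 (le_trans (hs (p+3) i (by omega) (by omega)) hib.le)
  calc Fs.card ≤ (Finset.Icc p (p+2)).card := Finset.card_le_card hsub
    _ = 3 := by rw [Nat.card_Icc]; omega
lemma hy_shift_nonempty (a b c d θ : ℝ) :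
    (Set.Ioc a b ∩ Set.Ioc (c - θ) (d - θ)).Nonempty ↔
      (Set.Ioc c d ∩ Set.Ioc (a + θ) (b + θ)).Nonempty := by
  constructor
  · rintro ⟨x, ⟨h1, h2⟩, ⟨h3, h4⟩⟩
    exact ⟨x + θ, ⟨by linarith, by linarith⟩, ⟨by linarith, by linarith⟩⟩
  · rintro ⟨x, ⟨h1, h2⟩, ⟨h3, h4⟩⟩
    exact ⟨x - θ, ⟨by linarith, by linarith⟩, ⟨by linarith, by linarith⟩⟩

open scoped Classical in
/-- Hayashi–Yoshida reduction procedure: given two partitions of `[0,T]` into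
consecutive half-open intervals (encoded by their strictly increasing sequences
of endpoints `t1`, `t2`) and a lag `θ`, there exist coarsenings `s1` of `t1`
and `s2` of `t2` (obtained by merging consecutive intervals) such that
(i) the Hayashi–Yoshida bilinear sums
`Σ_{i,j} X¹(I_i) X²(J_j) 1_{I_i ∩ (J_j - θ) ≠ ∅}` are unchanged for all
additive interval functions `X¹, X²`, and (ii) every interval of one partition
overlaps at most 3 intervals of the other. -/
theorem hayashi_yoshida_reduction
    (T θ : ℝ) (hT : 0 < T) (n1 n2 : ℕ) (hn1 : 0 < n1) (hn2 : 0 < n2)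
    (t1 t2 : ℕ → ℝ)
    (ht1 : StrictMonoOn t1 (Set.Iic n1)) (ht2 : StrictMonoOn t2 (Set.Iic n2))
    (ht10 : t1 0 = 0) (ht1T : t1 n1 = T) (ht20 : t2 0 = 0) (ht2T : t2 n2 = T) :
    ∃ (m1 m2 : ℕ) (s1 s2 : ℕ → ℝ),
      0 < m1 ∧ 0 < m2 ∧
      StrictMonoOn s1 (Set.Iic m1) ∧ StrictMonoOn s2 (Set.Iic m2) ∧
      s1 0 = 0 ∧ s1 m1 = T ∧ s2 0 = 0 ∧ s2 m2 = T ∧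
      -- the new partitions are coarsenings of the original ones:
      (∀ i ≤ m1, ∃ k ≤ n1, s1 i = t1 k) ∧ (∀ j ≤ m2, ∃ k ≤ n2, s2 j = t2 k) ∧
      -- (i) the Hayashi–Yoshida bilinear sums are unchanged:
      (∀ X1 X2 : ℝ → ℝ,
        (∑ i ∈ Finset.range m1, ∑ j ∈ Finset.range m2,
          if (Set.Ioc (s1 i) (s1 (i + 1)) ∩
              Set.Ioc (s2 j - θ) (s2 (j + 1) - θ)).Nonempty then
            (X1 (s1 (i + 1)) - X1 (s1 i)) * (X2 (s2 (j + 1)) - X2 (s2 j)) else 0)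
        = ∑ i ∈ Finset.range n1, ∑ j ∈ Finset.range n2,
          if (Set.Ioc (t1 i) (t1 (i + 1)) ∩
              Set.Ioc (t2 j - θ) (t2 (j + 1) - θ)).Nonempty then
            (X1 (t1 (i + 1)) - X1 (t1 i)) * (X2 (t2 (j + 1)) - X2 (t2 j)) else 0) ∧
      -- (ii) bounded overlap in both directions:
      (∀ j < m2, ((Finset.range m1).filter fun i =>
        (Set.Ioc (s1 i) (s1 (i + 1)) ∩
          Set.Ioc (s2 j - θ) (s2 (j + 1) - θ)).Nonempty).card ≤ 3) ∧
      (∀ i < m1, ((Finset.range m2).filter fun j =>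
        (Set.Ioc (s1 i) (s1 (i + 1)) ∩
          Set.Ioc (s2 j - θ) (s2 (j + 1) - θ)).Nonempty).card ≤ 3) := by
  classical
  have t1le : ∀ a b : ℕ, a ≤ b → b ≤ n1 → t1 a ≤ t1 b := fun a b hab hb =>
    ht1.monotoneOn (Set.mem_Iic.mpr (hab.trans hb)) (Set.mem_Iic.mpr hb) hab
  have t1lt : ∀ a b : ℕ, a < b → b ≤ n1 → t1 a < t1 b := fun a b hab hb =>
    ht1 (Set.mem_Iic.mpr (hab.le.trans hb)) (Set.mem_Iic.mpr hb) hab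
  have t2le : ∀ a b : ℕ, a ≤ b → b ≤ n2 → t2 a ≤ t2 b := fun a b hab hb =>
    ht2.monotoneOn (Set.mem_Iic.mpr (hab.trans hb)) (Set.mem_Iic.mpr hb) hab
  have t2lt : ∀ a b : ℕ, a < b → b ≤ n2 → t2 a < t2 b := fun a b hab hb =>
    ht2 (Set.mem_Iic.mpr (hab.le.trans hb)) (Set.mem_Iic.mpr hb) hab
  -- removal predicate for partition 1 and construction of the coarsening
  obtain ⟨m1, e1, hm1, he1mono, he10, he1m, he1le, he1notR, he1gap⟩ :=
    hy_exists_enum n1 hn1 (fun k => ∃ j < n2,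
      Set.Ioc (t1 (k - 1)) (t1 (k + 1)) ⊆ Set.Ioc (t2 j - θ) (t2 (j + 1) - θ))
  set s1 : ℕ → ℝ := fun i => t1 (e1 i) with hs1def
  have hs1mono : StrictMonoOn s1 (Set.Iic m1) := fun i hi j hj hij =>
    ht1 (Set.mem_Iic.mpr (he1le i hi)) (Set.mem_Iic.mpr (he1le j hj)) (he1mono hi hj hij)
  have s1le : ∀ a b : ℕ, a ≤ b → b ≤ m1 → s1 a ≤ s1 b := fun a b hab hb =>
    hs1mono.monotoneOn (Set.mem_Iic.mpr (hab.trans hb)) (Set.mem_Iic.mpr hb) hab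
  have s1lt : ∀ a b : ℕ, a < b → b ≤ m1 → s1 a < s1 b := fun a b hab hb =>
    hs1mono (Set.mem_Iic.mpr (hab.le.trans hb)) (Set.mem_Iic.mpr hb) hab
  -- removal predicate for partition 2 (in shifted form)
  obtain ⟨m2, e2, hm2, he2mono, he20, he2m, he2le, he2notR, he2gap⟩ :=
    hy_exists_enum n2 hn2 (fun k => ∃ i < m1,
      Set.Ioc (t2 (k - 1)) (t2 (k + 1)) ⊆ Set.Ioc (s1 i + θ) (s1 (i + 1) + θ))
  set s2 : ℕ → ℝ := fun j => t2 (e2 j) with hs2def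
  have hs2mono : StrictMonoOn s2 (Set.Iic m2) := fun i hi j hj hij =>
    ht2 (Set.mem_Iic.mpr (he2le i hi)) (Set.mem_Iic.mpr (he2le j hj)) (he2mono hi hj hij)
  have s2le : ∀ a b : ℕ, a ≤ b → b ≤ m2 → s2 a ≤ s2 b := fun a b hab hb =>
    hs2mono.monotoneOn (Set.mem_Iic.mpr (hab.trans hb)) (Set.mem_Iic.mpr hb) hab
  -- disjointness of the interval families
  have hA1 : ∀ j < n2, ∀ j' < n2, j ≠ j' →
      Set.Ioc (t2 j - θ) (t2 (j + 1) - θ) ∩ Set.Ioc (t2 j' - θ) (t2 (j' + 1) - θ) = ∅ := by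
    intro j hj j' hj' hne
    rcases lt_or_gt_of_ne hne with h | h
    · exact hy_ioc_disj (by linarith [t2le (j+1) j' (by omega) (by omega)])
    · rw [Set.inter_comm]
      exact hy_ioc_disj (by linarith [t2le (j'+1) j (by omega) (by omega)])
  have hA2 : ∀ i < m1, ∀ i' < m1, i ≠ i' →
      Set.Ioc (s1 i + θ) (s1 (i + 1) + θ) ∩ Set.Ioc (s1 i' + θ) (s1 (i' + 1) + θ) = ∅ := by
    intro i hi i' hi' hne
    rcases lt_or_gt_of_ne hne with h | h
    · exact hy_ioc_disj (by linarith [s1le (i+1) i' (by omega) (by omega)])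
    · rw [Set.inter_comm]
      exact hy_ioc_disj (by linarith [s1le (i'+1) i (by omega) (by omega)])
  have hD1 : ∀ i < m1, ∀ i' < m1, i ≠ i' →
      Set.Ioc (s1 i) (s1 (i + 1)) ∩ Set.Ioc (s1 i') (s1 (i' + 1)) = ∅ := by
    intro i hi i' hi' hne
    rcases lt_or_gt_of_ne hne with h | h
    · exact hy_ioc_disj (s1le (i+1) i' (by omega) (by omega))
    · rw [Set.inter_comm]
      exact hy_ioc_disj (s1le (i'+1) i (by omega) (by omega))
  refine ⟨m1, m2, s1, s2, hm1, hm2, hs1mono, hs2mono, ?_, ?_, ?_, ?_, ?_, ?_, ?_, ?_, ?_⟩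
  · show t1 (e1 0) = 0; rw [he10, ht10]
  · show t1 (e1 m1) = T; rw [he1m, ht1T]
  · show t2 (e2 0) = 0; rw [he20, ht20]
  · show t2 (e2 m2) = T; rw [he2m, ht2T]
  · exact fun i hi => ⟨e1 i, he1le i hi, rfl⟩
  · exact fun j hj => ⟨e2 j, he2le j hj, rfl⟩
  · -- (i) the bilinear sums
    intro X1 X2
    have EB : (∑ i ∈ Finset.range m1, ∑ j ∈ Finset.range n2,
        if (Set.Ioc (s1 i) (s1 (i + 1)) ∩
            Set.Ioc (t2 j - θ) (t2 (j + 1) - θ)).Nonempty then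
          (X1 (s1 (i + 1)) - X1 (s1 i)) * (X2 (t2 (j + 1)) - X2 (t2 j)) else 0)
        = ∑ i ∈ Finset.range n1, ∑ j ∈ Finset.range n2,
        if (Set.Ioc (t1 i) (t1 (i + 1)) ∩
            Set.Ioc (t2 j - θ) (t2 (j + 1) - θ)).Nonempty then
          (X1 (t1 (i + 1)) - X1 (t1 i)) * (X2 (t2 (j + 1)) - X2 (t2 j)) else 0 :=
      hy_sum_invariance n1 n2 t1 ht1
        (fun j => Set.Ioc (t2 j - θ) (t2 (j + 1) - θ)) hA1
        m1 e1 he1mono he10 he1m he1le he1gap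
        (fun l => X1 (t1 l)) (fun j => X2 (t2 (j + 1)) - X2 (t2 j))
    have EA' := hy_sum_invariance n2 m1 t2 ht2
        (fun i => Set.Ioc (s1 i + θ) (s1 (i + 1) + θ)) hA2
        m2 e2 he2mono he20 he2m he2le he2gap
        (fun l => X2 (t2 l)) (fun i => X1 (s1 (i + 1)) - X1 (s1 i))
    calc (∑ i ∈ Finset.range m1, ∑ j ∈ Finset.range m2,
          if (Set.Ioc (s1 i) (s1 (i + 1)) ∩
              Set.Ioc (s2 j - θ) (s2 (j + 1) - θ)).Nonempty then
            (X1 (s1 (i + 1)) - X1 (s1 i)) * (X2 (s2 (j + 1)) - X2 (s2 j)) else 0)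
        = ∑ j ∈ Finset.range m2, ∑ i ∈ Finset.range m1,
          if (Set.Ioc (t2 (e2 j)) (t2 (e2 (j + 1))) ∩
              Set.Ioc (s1 i + θ) (s1 (i + 1) + θ)).Nonempty then
            (X2 (t2 (e2 (j + 1))) - X2 (t2 (e2 j))) * (X1 (s1 (i + 1)) - X1 (s1 i)) else 0 := by
          rw [Finset.sum_comm]
          refine Finset.sum_congr rfl (fun j _ => Finset.sum_congr rfl (fun i _ => ?_))
          exact if_congr (hy_shift_nonempty (s1 i) (s1 (i + 1)) (s2 j) (s2 (j + 1)) θ)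
            (mul_comm _ _) rfl
      _ = ∑ l ∈ Finset.range n2, ∑ i ∈ Finset.range m1,
          if (Set.Ioc (t2 l) (t2 (l + 1)) ∩
              Set.Ioc (s1 i + θ) (s1 (i + 1) + θ)).Nonempty then
            (X2 (t2 (l + 1)) - X2 (t2 l)) * (X1 (s1 (i + 1)) - X1 (s1 i)) else 0 := EA'
      _ = ∑ i ∈ Finset.range m1, ∑ j ∈ Finset.range n2,
          if (Set.Ioc (s1 i) (s1 (i + 1)) ∩
              Set.Ioc (t2 j - θ) (t2 (j + 1) - θ)).Nonempty then
            (X1 (s1 (i + 1)) - X1 (s1 i)) * (X2 (t2 (j + 1)) - X2 (t2 j)) else 0 := by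
          rw [Finset.sum_comm]
          refine Finset.sum_congr rfl (fun i _ => Finset.sum_congr rfl (fun j _ => ?_))
          exact if_congr ((hy_shift_nonempty (s1 i) (s1 (i + 1)) (t2 j) (t2 (j + 1)) θ).symm)
            (mul_comm _ _) rfl
      _ = _ := EB
  · -- (ii) direction 1
    intro j hj
    apply hy_bound_three m1 s1 (s2 j - θ) (s2 (j + 1) - θ) s1le
    intro i hi2 ⟨h1, h2⟩
    have hjj : e2 j < e2 (j + 1) :=
      he2mono (Set.mem_Iic.mpr (by omega)) (Set.mem_Iic.mpr (by omega)) (by omega)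
    have hj1n : e2 (j + 1) ≤ n2 := he2le (j + 1) (by omega)
    rcases eq_or_lt_of_le (Nat.succ_le_of_lt hjj) with heq | hlt
    · -- unmerged case: contradiction with survival of endpoint e1 (i+1)
      have hk1 : e1 i < e1 (i + 1) :=
        he1mono (Set.mem_Iic.mpr (by omega)) (Set.mem_Iic.mpr (by omega)) (by omega)
      have hk2 : e1 (i + 1) < e1 (i + 2) :=
        he1mono (Set.mem_Iic.mpr (by omega)) (Set.mem_Iic.mpr (by omega)) (by omega)
      have hkpos : 0 < e1 (i + 1) := by
        have := he1mono (Set.mem_Iic.mpr (by omega : (0:ℕ) ≤ m1))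
          (Set.mem_Iic.mpr (by omega : i + 1 ≤ m1)) (by omega)
        omega
      have hkn : e1 (i + 1) < n1 := by
        have := he1mono (Set.mem_Iic.mpr (by omega : i + 1 ≤ m1))
          (Set.mem_Iic.mpr (le_rfl : m1 ≤ m1)) (by omega)
        omega
      have hi2n : e1 (i + 2) ≤ n1 := he1le (i + 2) (by omega)
      rcases he1notR (i + 1) (by omega) with h0 | hn | hnR
      · omega
      · omega
      apply hnR
      refine ⟨e2 j, by omega, ?_⟩
      rintro x ⟨hx1, hx2⟩
      have hgoal : x ∈ Set.Ioc (s2 j - θ) (s2 (j + 1) - θ) → x ∈ Set.Ioc (t2 (e2 j) - θ) (t2 (e2 j + 1) - θ) := by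
        intro hmem
        have : s2 (j + 1) = t2 (e2 j + 1) := by show t2 (e2 (j + 1)) = _; rw [← heq]
        rw [← this]
        exact hmem
      rcases le_or_gt x (t1 (e1 (i + 1))) with hle | hgt
      · refine hgoal (h1 ⟨lt_of_le_of_lt ?_ hx1, hle⟩)
        exact t1le (e1 i) (e1 (i + 1) - 1) (by omega) (by omega)
      · refine hgoal (h2 ⟨hgt, hx2.trans ?_⟩)
        exact t1le (e1 (i + 1) + 1) (e1 (i + 2)) (by omega) hi2n
    · -- merged case
      obtain ⟨i', hi', hsub⟩ := hy_merged_subset n2 m1 t2 ht2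
        (fun i => Set.Ioc (s1 i + θ) (s1 (i + 1) + θ)) hA2 hlt hj1n (he2gap j hj)
      have key : ∀ a, a < m1 →
          Set.Ioc (s1 a) (s1 (a + 1)) ⊆ Set.Ioc (s2 j - θ) (s2 (j + 1) - θ) → a = i' := by
        intro a ha hsubA
        by_contra hne
        have hx : s1 (a + 1) ∈ Set.Ioc (s1 a) (s1 (a + 1)) :=
          ⟨s1lt a (a + 1) (by omega) (by omega), le_rfl⟩
        obtain ⟨u1, u2⟩ := hsubA hx
        have h3 : s1 (a + 1) + θ ∈ Set.Ioc (t2 (e2 j)) (t2 (e2 (j + 1))) := by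
          constructor
          · have : s2 j = t2 (e2 j) := rfl
            linarith [u1, this.ge]
          · have : s2 (j + 1) = t2 (e2 (j + 1)) := rfl
            linarith [u2, this.le]
        obtain ⟨v1, v2⟩ := hsub h3
        have h5 : s1 (a + 1) ∈ Set.Ioc (s1 i') (s1 (i' + 1)) := ⟨by linarith, by linarith⟩
        have hdisj := hD1 a ha i' hi' hne
        have : s1 (a + 1) ∈ Set.Ioc (s1 a) (s1 (a + 1)) ∩ Set.Ioc (s1 i') (s1 (i' + 1)) :=
          ⟨hx, h5⟩
        rw [hdisj] at this
        exact this
      have e1i : i = i' := key i (by omega) h1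
      have e2i : i + 1 = i' := key (i + 1) (by omega) h2
      omega
  · -- (ii) direction 2
    intro i hi
    have hfe : ((Finset.range m2).filter fun j =>
        (Set.Ioc (s1 i) (s1 (i + 1)) ∩
          Set.Ioc (s2 j - θ) (s2 (j + 1) - θ)).Nonempty)
        = ((Finset.range m2).filter fun j =>
        (Set.Ioc ((fun k => s2 k - θ) j) ((fun k => s2 k - θ) (j + 1)) ∩
          Set.Ioc (s1 i) (s1 (i + 1))).Nonempty) := by
      refine Finset.filter_congr (fun j _ => ?_)
      rw [Set.inter_comm]
    rw [hfe]
    apply hy_bound_three m2 (fun k => s2 k - θ) (s1 i) (s1 (i + 1))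
      (fun a b hab hb => by simpa using s2le a b hab hb)
    intro j hj2 hcon
    obtain ⟨h1, h2⟩ := hcon
    have hkpos : 0 < e2 (j + 1) := by
      have := he2mono (Set.mem_Iic.mpr (by omega : (0:ℕ) ≤ m2))
        (Set.mem_Iic.mpr (by omega : j + 1 ≤ m2)) (by omega)
      omega
    have hkn : e2 (j + 1) < n2 := by
      have := he2mono (Set.mem_Iic.mpr (by omega : j + 1 ≤ m2))
        (Set.mem_Iic.mpr (le_rfl : m2 ≤ m2)) (by omega)
      omega
    have hjj : e2 j < e2 (j + 1) :=
      he2mono (Set.mem_Iic.mpr (by omega)) (Set.mem_Iic.mpr (by omega)) (by omega)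
    have hjj2 : e2 (j + 1) < e2 (j + 2) :=
      he2mono (Set.mem_Iic.mpr (by omega)) (Set.mem_Iic.mpr (by omega)) (by omega)
    have hj2n : e2 (j + 2) ≤ n2 := he2le (j + 2) (by omega)
    rcases he2notR (j + 1) (by omega) with h0 | hn | hnR
    · omega
    · omega
    apply hnR
    refine ⟨i, hi, ?_⟩
    rintro x ⟨hx1, hx2⟩
    have ha : t2 (e2 j) ≤ t2 (e2 (j + 1) - 1) := t2le _ _ (by omega) (by omega)
    have hb : t2 (e2 (j + 1) + 1) ≤ t2 (e2 (j + 2)) := t2le _ _ (by omega) hj2n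
    have hs2j : s2 j = t2 (e2 j) := rfl
    have hs2j1 : s2 (j + 1) = t2 (e2 (j + 1)) := rfl
    have hs2j2 : s2 (j + 2) = t2 (e2 (j + 2)) := rfl
    rcases le_or_gt (x - θ) (s2 (j + 1) - θ) with hle | hgt
    · have hm : x - θ ∈ Set.Ioc (s2 j - θ) (s2 (j + 1) - θ) := by
        constructor
        · rw [hs2j]; linarith
        · exact hle
      obtain ⟨w1, w2⟩ := h1 hm
      exact ⟨by linarith, by linarith⟩
    · have hm : x - θ ∈ Set.Ioc (s2 (j + 1) - θ) (s2 (j + 2) - θ) := by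
        constructor
        · exact hgt
        · rw [hs2j2]; linarith
      obtain ⟨w1, w2⟩ := h2 hm
      exact ⟨by linarith, by linarith⟩
end

section
/- Let H_L(λ) = 2 sin^L(λ/2) Σ_{p=0}^{L/2-1} C(L/2-1+p, p) cos^{2p}(λ/2) with L even, and G_L(λ) = H_L(λ-π). Then for every fixed λ with π/2 < |λ| ≤ π one has H_L(λ) → 2 as L → ∞, and for every fixed λ with 0 < |λ| < π/2 one has H_L(λ) → 0 as L → ∞. -/
open Finset Filter

/-- Telescoping identity for partial sums of negative-binomial type coefficients. -/
lemma daub_auxT (c : ℝ) (k : ℕ) : ∀ n : ℕ,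
    (1 - c) * ∑ p ∈ Finset.range (n + 1), ((k + 1 + p).choose p : ℝ) * c ^ p
      = (∑ p ∈ Finset.range (n + 1), ((k + p).choose p : ℝ) * c ^ p)
        - ((k + 1 + n).choose n : ℝ) * c ^ (n + 1) := by
  intro n
  induction n with
  | zero => simp
  | succ n ih =>
    rw [Finset.sum_range_succ, Finset.sum_range_succ
      (f := fun p => ((k + p).choose p : ℝ) * c ^ p)]
    have e2 : k + (n + 1) = k + 1 + n := by omega
    have pas : ((k + 1 + (n + 1)).choose (n + 1) : ℝ)
        = ((k + 1 + n).choose n : ℝ) + ((k + 1 + n).choose (n + 1) : ℝ) := by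
      have e1 : k + 1 + (n + 1) = (k + 1 + n) + 1 := by omega
      rw [e1, Nat.choose_succ_succ]
      push_cast; ring
    rw [e2, pas]
    linear_combination ih

/-- One-step recurrence for `B_m(s) = s^m ∑_{p<m} C(m-1+p,p) c^p` with `s + c = 1`. -/
lemma daub_stepS (s c : ℝ) (h : s + c = 1) (k : ℕ) :
    s ^ (k + 2) * ∑ p ∈ Finset.range (k + 2), ((k + 1 + p).choose p : ℝ) * c ^ p
      = s ^ (k + 1) * ∑ p ∈ Finset.range (k + 1), ((k + p).choose p : ℝ) * c ^ p
        + ((k + (k + 1)).choose (k + 1) : ℝ) * s ^ (k + 1) * c ^ (k + 1) * (s - c) := by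
  have T1 := daub_auxT c k (k + 1)
  rw [Finset.sum_range_succ (f := fun p => ((k + p).choose p : ℝ) * c ^ p)] at T1
  have hDr : ((k + 1 + (k + 1)).choose (k + 1) : ℝ)
      = 2 * ((k + (k + 1)).choose (k + 1) : ℝ) := by
    have hsym : (2 * k + 1).choose k = (2 * k + 1).choose (k + 1) := by
      rw [← Nat.choose_symm (by omega : k + 1 ≤ 2 * k + 1)]
      congr 1; omega
    have e1 : k + 1 + (k + 1) = (2 * k + 1) + 1 := by omega
    have e2 : k + (k + 1) = 2 * k + 1 := by omega
    rw [e1, e2, Nat.choose_succ_succ, hsym]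
    push_cast; ring
  linear_combination s ^ (k + 1) * T1
    + (s ^ (k + 1) * (∑ p ∈ Finset.range (k + 2), ((k + 1 + p).choose p : ℝ) * c ^ p)) * h
    - s ^ (k + 1) * c ^ (k + 2) * hDr
    - 2 * ((k + (k + 1)).choose (k + 1) : ℝ) * s ^ (k + 1) * c ^ (k + 1) * h
    + ((k + (k + 1)).choose (k + 1) : ℝ) * s ^ (k + 1) * c ^ (k + 1) * h

/-- The Daubechies identity `B_m(s) + B_m(c) = 1` when `s + c = 1`. -/
lemma daub_keyId (s c : ℝ) (h : s + c = 1) (k : ℕ) :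
    s ^ (k + 1) * ∑ p ∈ Finset.range (k + 1), ((k + p).choose p : ℝ) * c ^ p
      + c ^ (k + 1) * ∑ p ∈ Finset.range (k + 1), ((k + p).choose p : ℝ) * s ^ p = 1 := by
  induction k with
  | zero => simpa using h
  | succ k ih =>
    have h1 := daub_stepS s c h k
    have h2 := daub_stepS c s (by linarith) k
    have e : k + 1 + 1 = k + 2 := rfl
    rw [e, h1, h2]
    linear_combination ih

lemma daub_choose_le_two_pow (n r : ℕ) : n.choose r ≤ 2 ^ n := by
  rcases le_or_gt r n with h | h
  · calc n.choose r ≤ ∑ m ∈ Finset.range (n + 1), n.choose m :=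
        Finset.single_le_sum (fun i _ => Nat.zero_le _) (Finset.mem_range.2 (by omega))
      _ = 2 ^ n := Nat.sum_range_choose n
  · rw [Nat.choose_eq_zero_of_lt h]; exact Nat.zero_le _

/-- If `0 ≤ x < 1/2` and `x + y = 1`, then `B_{k+1}(x) → 0`. -/
lemma daub_tendsto_term (x y : ℝ) (hx0 : 0 ≤ x) (hx : x < 1 / 2) (hxy : x + y = 1) :
    Tendsto (fun k : ℕ =>
      x ^ (k + 1) * ∑ p ∈ Finset.range (k + 1), ((k + p).choose p : ℝ) * y ^ p)
      atTop (nhds 0) := by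
  have hy0 : 0 ≤ y := by linarith
  set M : ℝ := max 1 (2 * y) with hM
  have hM1 : 1 ≤ M := le_max_left _ _
  set r : ℝ := 2 * x * M with hr
  have hr0 : 0 ≤ r := by positivity
  have hr1 : r < 1 := by
    rcases le_total (2 * y) 1 with h | h
    · have : M = 1 := max_eq_left h
      rw [hr, this]; linarith
    · have : M = 2 * y := max_eq_right h
      rw [hr, this]
      nlinarith [sq_nonneg (x - y)]
  have hbound : ∀ k : ℕ,
      x ^ (k + 1) * ∑ p ∈ Finset.range (k + 1), ((k + p).choose p : ℝ) * y ^ p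
        ≤ x * ((k + 1 : ℝ) * r ^ k) := by
    intro k
    have hsum : ∑ p ∈ Finset.range (k + 1), ((k + p).choose p : ℝ) * y ^ p
        ≤ (k + 1 : ℝ) * (2 ^ k * M ^ k) := by
      calc ∑ p ∈ Finset.range (k + 1), ((k + p).choose p : ℝ) * y ^ p
          ≤ ∑ p ∈ Finset.range (k + 1), (2 ^ k * M ^ k : ℝ) := by
            refine Finset.sum_le_sum fun p hp => ?_
            have hp' : p ≤ k := by simpa [Nat.lt_succ] using Finset.mem_range.1 hp
            have h1 : ((k + p).choose p : ℝ) ≤ 2 ^ (k + p) := by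
              exact_mod_cast Nat.cast_le.2 (daub_choose_le_two_pow (k + p) p)
            have h2 : y ^ p ≤ (M / 2) ^ p := by
              apply pow_le_pow_left₀ hy0
              rw [le_div_iff₀ (by norm_num : (0:ℝ) < 2)]
              calc y * 2 = 2 * y := by ring
                _ ≤ M := le_max_right _ _
            calc ((k + p).choose p : ℝ) * y ^ p ≤ 2 ^ (k + p) * (M / 2) ^ p := by
                  apply mul_le_mul h1 h2 (by positivity) (by positivity)
              _ = 2 ^ k * M ^ p := by
                  rw [pow_add, div_pow]
                  field_simp
              _ ≤ 2 ^ k * M ^ k := by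
                  gcongr
        _ = (k + 1 : ℝ) * (2 ^ k * M ^ k) := by
            rw [Finset.sum_const, Finset.card_range]; ring
    calc x ^ (k + 1) * ∑ p ∈ Finset.range (k + 1), ((k + p).choose p : ℝ) * y ^ p
        ≤ x ^ (k + 1) * ((k + 1 : ℝ) * (2 ^ k * M ^ k)) := by
          apply mul_le_mul_of_nonneg_left hsum (by positivity)
      _ = x * ((k + 1 : ℝ) * r ^ k) := by
          rw [hr, mul_pow, mul_pow, pow_succ]; ring
  have hpos : ∀ k : ℕ, 0 ≤
      x ^ (k + 1) * ∑ p ∈ Finset.range (k + 1), ((k + p).choose p : ℝ) * y ^ p := by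
    intro k
    apply mul_nonneg (by positivity)
    exact Finset.sum_nonneg fun p _ => by positivity
  have hlim : Tendsto (fun k : ℕ => x * ((k + 1 : ℝ) * r ^ k)) atTop (nhds 0) := by
    have h1 : Tendsto (fun k : ℕ => (k : ℝ) * r ^ k) atTop (nhds 0) :=
      tendsto_self_mul_const_pow_of_lt_one hr0 hr1
    have h2 : Tendsto (fun k : ℕ => r ^ k) atTop (nhds 0) :=
      tendsto_pow_atTop_nhds_zero_of_lt_one hr0 hr1
    have h3 : Tendsto (fun k : ℕ => (k : ℝ) * r ^ k + r ^ k) atTop (nhds 0) := by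
      simpa using h1.add h2
    have h4 : Tendsto (fun k : ℕ => x * ((k : ℝ) * r ^ k + r ^ k)) atTop (nhds 0) := by
      simpa using h3.const_mul x
    refine h4.congr fun k => ?_
    ring
  exact tendsto_of_tendsto_of_tendsto_of_le_of_le tendsto_const_nhds hlim hpos hbound

/-- Pointwise convergence of the Daubechies power transfer function
`H_L(λ) = 2 sin^L(λ/2) Σ_{p=0}^{L/2-1} C(L/2-1+p, p) cos^{2p}(λ/2)` (for even
`L → ∞`) to the ideal high-pass filter: `H_L(λ) → 2` for `π/2 < |λ| ≤ π` and
`H_L(λ) → 0` for `0 < |λ| < π/2`. -/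
theorem daubechies_power_transfer_limit
    (H : ℕ → ℝ → ℝ)
    (hH : ∀ (L : ℕ) (lam : ℝ), H L lam =
      2 * Real.sin (lam / 2) ^ L *
        ∑ p ∈ Finset.range (L / 2),
          ((L / 2 - 1 + p).choose p : ℝ) * Real.cos (lam / 2) ^ (2 * p)) :
    (∀ lam : ℝ, Real.pi / 2 < |lam| → |lam| ≤ Real.pi →
      Tendsto (fun m : ℕ => H (2 * m) lam) atTop (nhds 2)) ∧
    (∀ lam : ℝ, 0 < |lam| → |lam| < Real.pi / 2 →
      Tendsto (fun m : ℕ => H (2 * m) lam) atTop (nhds 0)) := by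
  have hform : ∀ (lam : ℝ) (k : ℕ), H (2 * (k + 1)) lam =
      2 * ((Real.sin (lam / 2) ^ 2) ^ (k + 1) *
        ∑ p ∈ Finset.range (k + 1),
          ((k + p).choose p : ℝ) * (Real.cos (lam / 2) ^ 2) ^ p) := by
    intro lam k
    rw [hH]
    have h2 : 2 * (k + 1) / 2 = k + 1 := by omega
    simp only [h2, Nat.add_sub_cancel, ← pow_mul]
    ring
  constructor
  · -- high-frequency band: H → 2
    intro lam h1 h2
    set s : ℝ := Real.sin (lam / 2) ^ 2 with hs
    set c : ℝ := Real.cos (lam / 2) ^ 2 with hc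
    have hsc : s + c = 1 := Real.sin_sq_add_cos_sq (lam / 2)
    have hclam : Real.cos lam < 0 := by
      rw [← Real.cos_abs]
      refine Real.cos_neg_of_pi_div_two_lt_of_lt h1 ?_
      have hpi : 0 < Real.pi := Real.pi_pos
      linarith
    have hshalf : 1 / 2 < s := by
      have := Real.sin_sq_eq_half_sub (lam / 2)
      rw [hs, this]
      have : 2 * (lam / 2) = lam := by ring
      rw [this]
      linarith
    have hchalf : c < 1 / 2 := by linarith
    have hc0 : 0 ≤ c := sq_nonneg _
    -- H(2(k+1)) = 2 - 2 * (c^{k+1} Σ C s^p)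
    have hform2 : ∀ k : ℕ, H (2 * (k + 1)) lam =
        2 - 2 * (c ^ (k + 1) *
          ∑ p ∈ Finset.range (k + 1), ((k + p).choose p : ℝ) * s ^ p) := by
      intro k
      rw [hform lam k]
      have := daub_keyId s c hsc k
      linarith
    rw [← tendsto_add_atTop_iff_nat 1]
    have hterm := daub_tendsto_term c s hc0 hchalf (by linarith)
    have : Tendsto (fun k : ℕ => 2 - 2 * (c ^ (k + 1) *
        ∑ p ∈ Finset.range (k + 1), ((k + p).choose p : ℝ) * s ^ p))
        atTop (nhds 2) := by
      have := (hterm.const_mul (2 : ℝ)).const_sub (2 : ℝ)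
      simpa using this
    exact this.congr fun k => (hform2 k).symm
  · -- low-frequency band: H → 0
    intro lam h1 h2
    set s : ℝ := Real.sin (lam / 2) ^ 2 with hs
    set c : ℝ := Real.cos (lam / 2) ^ 2 with hc
    have hsc : s + c = 1 := Real.sin_sq_add_cos_sq (lam / 2)
    have hclam : 0 < Real.cos lam := by
      rw [← Real.cos_abs]
      apply Real.cos_pos_of_mem_Ioo
      rw [Set.mem_Ioo]
      constructor
      · have h0 : 0 ≤ |lam| := abs_nonneg lam
        have hpi : 0 < Real.pi := Real.pi_pos
        linarith
      · exact h2
    have hshalf : s < 1 / 2 := by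
      have := Real.sin_sq_eq_half_sub (lam / 2)
      rw [hs, this]
      have : 2 * (lam / 2) = lam := by ring
      rw [this]
      linarith
    have hs0 : 0 ≤ s := sq_nonneg _
    rw [← tendsto_add_atTop_iff_nat 1]
    have hterm := daub_tendsto_term s c hs0 hshalf hsc
    have : Tendsto (fun k : ℕ => 2 * (s ^ (k + 1) *
        ∑ p ∈ Finset.range (k + 1), ((k + p).choose p : ℝ) * c ^ p))
        atTop (nhds 0) := by
      simpa using hterm.const_mul (2 : ℝ)
    exact this.congr fun k => (hform lam k).symm
end
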